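/- Let f, g : ℝ → ℝ be smooth with f'(g(t)) ≠ 0. Define A(Δt) = −(g'(t) + Δt g''(t))/f'(g(t) + Δt g'(t)) (the intermediate-boundary-condition ILW value of u_x^{(1)}) and B(Δt) = −[g'(t)f'(g(t)) + Δt g''(t)f'(g(t)) − Δt (g'(t))² f''(g(t))]/(f'(g(t)))² (the RK-based boundary-treatment value of u_x^{(1)}). Then A(0) = B(0), A'(0) = B'(0), and A''(0) − B''(0) = [2 f'(g(t)) f''(g(t)) g'(t) g''(t) + (g'(t))³(−2(f''(g(t)))² + f'(g(t)) f'''(g(t)))]/(f'(g(t)))³; in particular A(Δt) − B(Δt) = O(Δt²) as Δt → 0, and the two values differ at order Δt² unless the stated third-derivative coefficient vanishes. -/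

import Mathlib

open Asymptotics Filter


/-- comparison of the intermediate-boundary-condition ILW value
A(Δt) and the RK-based value B(Δt) of u_x⁽¹⁾: A and B agree to first order in
Δt, and their second derivatives at 0 differ by the displayed expression; in
particular A - B = O(Δt²). -/
theorem stmt4 (f g : ℝ → ℝ) (t : ℝ)
    (hf : ContDiff ℝ 3 f)
    (hg : ContDiff ℝ 2 g)
    (hfp : deriv f (g t) ≠ 0)
    (A B : ℝ → ℝ)
    (hA : ∀ Δt : ℝ, A Δt =
      -(deriv g t + Δt * deriv (deriv g) t) / deriv f (g t + Δt * deriv g t))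
    (hB : ∀ Δt : ℝ, B Δt =
      -(deriv g t * deriv f (g t) + Δt * deriv (deriv g) t * deriv f (g t)
        - Δt * (deriv g t)^2 * deriv (deriv f) (g t)) / (deriv f (g t))^2) :
    A 0 = B 0 ∧ deriv A 0 = deriv B 0 ∧
    deriv (deriv A) 0 - deriv (deriv B) 0 =
      (2 * deriv f (g t) * deriv (deriv f) (g t) * deriv g t * deriv (deriv g) t
        + (deriv g t)^3 * (-2 * (deriv (deriv f) (g t))^2
            + deriv f (g t) * deriv (deriv (deriv f)) (g t)))
        / (deriv f (g t))^3 ∧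
    (fun Δt => A Δt - B Δt) =O[nhds 0] (fun Δt => Δt^2) := by
  set a := deriv g t with ha
  set b := deriv (deriv g) t with hb
  set c := g t with hc
  set f1 := deriv f with hf1d
  set f2 := deriv f1 with hf2d
  set f3 := deriv f2 with hf3d
  -- smoothness facts
  have hf1 : ContDiff ℝ 2 f1 := by
    have : ContDiff ℝ (2+1) f := by norm_num; exact hf
    exact (contDiff_succ_iff_deriv.mp this).2.2
  have hf2 : ContDiff ℝ 1 f2 := by
    have : ContDiff ℝ (1+1) f1 := by norm_num; exact hf1
    exact (contDiff_succ_iff_deriv.mp this).2.2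
  have hdf1 : ∀ x, HasDerivAt f1 (f2 x) x := fun x =>
    (hf1.differentiable (by norm_num) x).hasDerivAt
  have hdf2 : ∀ x, HasDerivAt f2 (f3 x) x := fun x =>
    (hf2.differentiable (by norm_num) x).hasDerivAt
  set p := f1 c with hp
  set q := f2 c with hq
  set r := f3 c with hr
  -- inner affine map and phi, psi
  set φ : ℝ → ℝ := fun s => f1 (c + s * a) with hφ
  set ψ : ℝ → ℝ := fun s => f2 (c + s * a) with hψ
  have hu : ∀ s : ℝ, HasDerivAt (fun s : ℝ => c + s * a) a s := fun s => by
    simpa using ((hasDerivAt_id s).mul_const a).const_add c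
  have hdφ : ∀ s, HasDerivAt φ (ψ s * a) s := fun s =>
    by have := (hdf1 (c + s * a)).comp s (hu s); exact this
  have hdψ : ∀ s, HasDerivAt ψ (f3 (c + s * a) * a) s := fun s =>
    by have := (hdf2 (c + s * a)).comp s (hu s); exact this
  have hφ0 : φ 0 = p := by simp [hφ]; rfl
  have hψ0 : ψ 0 = q := by simp [hψ]; rfl
  have hφcont : Continuous φ := hf1.continuous.comp (by continuity)
  have hφ0ne : φ 0 ≠ 0 := by rw [hφ0]; exact hfp
  have hne : ∀ᶠ s in nhds (0:ℝ), φ s ≠ 0 :=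
    (hφcont.continuousAt (x := (0:ℝ))).eventually_ne hφ0ne
  -- A as a function
  have hAfun : A = fun s => -((a + s * b) / φ s) := by
    funext s; rw [hA s]; simp only [hφ]; exact neg_div _ _
  -- B facts
  set C1 : ℝ := -((b * p - a ^ 2 * q) / p ^ 2) with hC1
  have hdB : ∀ s : ℝ, HasDerivAt B C1 s := by
    intro s
    have hBfun : B = fun s => -(a * p) / p ^ 2 + s * C1 := by
      funext s; rw [hB s, hC1]; field_simp; ring
    rw [hBfun]
    simpa using ((hasDerivAt_id s).mul_const C1).const_add (-(a * p) / p ^ 2)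
  have hderivB : deriv B = fun _ => C1 := funext fun s => (hdB s).deriv
  -- derivative of A near 0
  set F : ℝ → ℝ := fun s => -((b * φ s - (a + s * b) * (ψ s * a)) / (φ s) ^ 2) with hF
  have hdA : ∀ s : ℝ, φ s ≠ 0 → HasDerivAt A (F s) s := by
    intro s hs
    rw [hAfun]
    have hN : HasDerivAt (fun s : ℝ => a + s * b) b s := by
      simpa using ((hasDerivAt_id s).mul_const b).const_add a
    exact (hN.div (hdφ s) hs).neg
  have hdAev : ∀ᶠ s in nhds (0:ℝ), HasDerivAt A (F s) s :=
    hne.mono fun s hs => hdA s hs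
  have hderivAev : deriv A =ᶠ[nhds (0:ℝ)] F :=
    hdAev.mono fun s hs => hs.deriv
  have hderivA0 : deriv A 0 = F 0 := (hdA 0 (hφ0 ▸ hfp)).deriv
  -- second derivative of A at 0
  set κ : ℝ := -(((b * (ψ 0 * a) - (b * (ψ 0 * a) + (a + 0 * b) * (f3 (c + 0 * a) * a * a))) * (φ 0)^2
      - (b * φ 0 - (a + 0 * b) * (ψ 0 * a)) * (2 * φ 0 ^ 1 * (ψ 0 * a))) / ((φ 0) ^ 2) ^ 2) with hκ
  have hdF0 : HasDerivAt F κ 0 := by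
    have hN : HasDerivAt (fun s : ℝ => a + s * b) b (0:ℝ) := by
      simpa using ((hasDerivAt_id (0:ℝ)).mul_const b).const_add a
    have hG : HasDerivAt (fun s => b * φ s - (a + s * b) * (ψ s * a))
        (b * (ψ 0 * a) - (b * (ψ 0 * a) + (a + 0 * b) * (f3 (c + 0 * a) * a * a))) 0 := by
      exact ((hdφ 0).const_mul b).sub (hN.mul ((hdψ 0).mul_const a))
    have hD : HasDerivAt (fun s => (φ s) ^ 2) (2 * φ 0 ^ 1 * (ψ 0 * a)) 0 := by
      simpa using (hdφ 0).fun_pow 2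
    have hφ0ne : (φ 0) ^ 2 ≠ 0 := pow_ne_zero 2 (hφ0 ▸ hfp)
    exact (hG.div hD hφ0ne).neg
  have hderiv2A : deriv (deriv A) 0 = κ := by
    rw [hderivAev.deriv_eq]
    exact hdF0.deriv
  refine ⟨?_, ?_, ?_, ?_⟩
  · rw [hA 0, hB 0]; simp only [zero_mul, add_zero, mul_zero, sub_zero]
    rw [← hp]
    field_simp
  · rw [hderivA0, hderivB]
    show -((b * φ 0 - (a + 0 * b) * (ψ 0 * a)) / φ 0 ^ 2) = C1
    rw [hφ0, hψ0, hC1]; ring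
  · rw [hderiv2A, hderivB]
    simp only [deriv_const']
    rw [hκ, hφ0, hψ0]
    simp only [zero_mul, add_zero, mul_zero]
    rw [← hr]
    field_simp
    ring
  -- Big-O part
  · set E : ℝ → ℝ := fun s => F s - C1 with hE
    have hE0 : E 0 = 0 := by
      show F 0 - C1 = 0
      show -((b * φ 0 - (a + 0 * b) * (ψ 0 * a)) / φ 0 ^ 2) - C1 = 0
      rw [hφ0, hψ0, hC1]; ring
    have hdE0 : HasDerivAt E κ 0 := hdF0.sub_const C1
    have hEbig : (fun z => E z) =O[nhds (0:ℝ)] fun z => z := by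
      have := hdE0.differentiableAt.isBigO_sub
      simpa [hE0] using this
    obtain ⟨K, hK⟩ := hEbig.bound
    have hKev : ∀ᶠ z in nhds (0:ℝ), ‖E z‖ ≤ |K| * ‖z‖ := by
      filter_upwards [hK] with z hz
      exact hz.trans (by
        have : K * ‖z‖ ≤ |K| * ‖z‖ := mul_le_mul_of_nonneg_right (le_abs_self K) (norm_nonneg z)
        simpa using this)
    have hDD : ∀ᶠ z in nhds (0:ℝ), HasDerivAt (fun s => A s - B s) (E z) z := by
      filter_upwards [hdAev] with z hz
      exact hz.sub (hdB z)
    have hcomb := hDD.and hKev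
    rw [Metric.eventually_nhds_iff] at hcomb
    obtain ⟨ε, hε, hball⟩ := hcomb
    rw [isBigO_iff]
    refine ⟨|K|, ?_⟩
    rw [Metric.eventually_nhds_iff]
    refine ⟨ε, hε, fun s hsε => ?_⟩
    have hseg : ∀ z ∈ segment ℝ (0:ℝ) s, dist z 0 < ε := by
      intro z hz
      obtain ⟨τ1, τ2, h1, h2, hsum, hzeq⟩ := hz
      have : z = τ2 * s := by simpa using hzeq.symm
      rw [Real.dist_eq, this]
      simp only [sub_zero, abs_mul]
      calc |τ2| * |s| ≤ 1 * |s| := by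
            apply mul_le_mul_of_nonneg_right _ (abs_nonneg s)
            rw [abs_of_nonneg h2]; linarith
        _ = |s| := one_mul _
        _ < ε := by simpa [Real.dist_eq] using hsε
    have key := Convex.norm_image_sub_le_of_norm_hasDerivWithin_le
      (f := fun z => A z - B z) (f' := E) (s := segment ℝ (0:ℝ) s) (C := |K| * |s|)
      (fun z hz => ((hball (hseg z hz)).1).hasDerivWithinAt)
      (fun z hz => by
        refine ((hball (hseg z hz)).2).trans ?_
        apply mul_le_mul_of_nonneg_left _ (abs_nonneg K)
        obtain ⟨τ1, τ2, h1, h2, hsum, hzeq⟩ := hz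
        have hzz : z = τ2 * s := by simpa using hzeq.symm
        rw [hzz]
        simp only [Real.norm_eq_abs, abs_mul]
        calc |τ2| * |s| ≤ 1 * |s| := by
              apply mul_le_mul_of_nonneg_right _ (abs_nonneg s)
              rw [abs_of_nonneg h2]; linarith
          _ = |s| := one_mul _)
      (convex_segment 0 s) (left_mem_segment ℝ 0 s) (right_mem_segment ℝ 0 s)
    have hAB0 : A 0 - B 0 = 0 := by
      rw [hA 0, hB 0]; simp only [zero_mul, add_zero, mul_zero, sub_zero]
      rw [← hp]
      field_simp
      ring
    rw [hAB0, sub_zero] at key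
    calc ‖A s - B s‖ ≤ (|K| * |s|) * ‖s - 0‖ := key
      _ = |K| * ‖s ^ 2‖ := by
          simp only [sub_zero, Real.norm_eq_abs, abs_pow]
          ring
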